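/- arXiv:1808.07278 — 8 statements merged into one kernel-verified Lean document; each statement's English description precedes it below -/
import Mathlib

section
/- In any tqBa5, the map f : K_I → K_C defined by f(α) = C(α) (the restriction of γ∘e_I) is an order isomorphism between the left kernel K_I = {Ia : a ∈ L} and right kernel K_C = {Ca : a ∈ L}. -/
theorem stmt10 {L : Type*} [DistribLattice L] [BoundedOrder L] (neg I : L → L)
    (neg_neg : ∀ a : L, neg (neg a) = a)
    (neg_sup : ∀ a b : L, neg (a ⊔ b) = neg a ⊓ neg b)
    (neg_inf : ∀ a b : L, neg (a ⊓ b) = neg a ⊔ neg b)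
    (T1 : ∀ a b : L, I (a ⊓ b) = I a ⊓ I b)
    (T2 : ∀ a : L, I (I a) = I a)
    (T3 : ∀ a : L, I a ≤ a)
    (T4 : I (⊤ : L) = ⊤)
    (T5 : ∀ a : L, neg (I (neg (I a))) = I a) :
    ∃ f : {x : L // ∃ a : L, x = I a} ≃o {x : L // ∃ a : L, x = neg (I (neg a))},
      ∀ α : {x : L // ∃ a : L, x = I a}, (f α : L) = neg (I (neg (α : L))) := by
  -- C fixes elements of K_I
  have hfix : ∀ x : L, (∃ a, x = I a) → neg (I (neg x)) = x := by
    rintro x ⟨a, rfl⟩; exact T5 a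
  -- I (neg (I b)) = neg (I b)
  have hnegI : ∀ b : L, I (neg (I b)) = neg (I b) := by
    intro b
    have h := congrArg neg (T5 b)
    rwa [neg_neg] at h
  -- every element of K_C is in K_I
  have hCK : ∀ a : L, neg (I (neg a)) = I (neg (I (neg a))) := by
    intro a
    rw [hnegI (neg a)]
  refine ⟨⟨⟨fun α => ⟨neg (I (neg α.1)), α.1, rfl⟩,
    fun β => ⟨β.1, by
      obtain ⟨a, ha⟩ := β.2
      exact ⟨neg (I (neg a)), by rw [ha]; exact hCK a⟩⟩,
    fun α => Subtype.ext (hfix α.1 α.2),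
    fun β => Subtype.ext (by
      obtain ⟨a, ha⟩ := β.2
      exact hfix β.1 ⟨neg (I (neg a)), by rw [ha]; exact hCK a⟩)⟩,
    ?_⟩, fun α => rfl⟩
  intro α β
  simp only [Equiv.coe_fn_mk]
  change (neg (I (neg α.1)) ≤ neg (I (neg β.1))) ↔ (α.1 ≤ β.1)
  rw [hfix α.1 α.2, hfix β.1 β.2]
end

section
/- In any tqBa5, for every α in the left kernel K_I, the element ∼α := I(¬α) satisfies ∼∼α = α. -/
theorem stmt11 {L : Type*} [DistribLattice L] [BoundedOrder L] (neg I : L → L)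
    (neg_neg : ∀ a : L, neg (neg a) = a)
    (neg_sup : ∀ a b : L, neg (a ⊔ b) = neg a ⊓ neg b)
    (neg_inf : ∀ a b : L, neg (a ⊓ b) = neg a ⊔ neg b)
    (T1 : ∀ a b : L, I (a ⊓ b) = I a ⊓ I b)
    (T2 : ∀ a : L, I (I a) = I a)
    (T3 : ∀ a : L, I a ≤ a)
    (T4 : I (⊤ : L) = ⊤)
    (T5 : ∀ a : L, neg (I (neg (I a))) = I a) :
    ∀ α : L, (∃ a : L, α = I a) → I (neg (I (neg α))) = α := by
  rintro α ⟨a, rfl⟩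
  rw [T5, T2]
end

section
/- In any tqBa5, for α, β in the kernel K_I, ∼(α ∪ β) = ∼α ∩ ∼β, where ∼α := I¬α, α ∪ β := I(α ∨ β), and α ∩ β := I(α ∧ β). Equivalently, I¬I(Ia ∨ Ib) = I(I¬Ia ∧ I¬Ib) for all a, b. -/
theorem stmt12 {L : Type*} [DistribLattice L] [BoundedOrder L] (neg I : L → L)
    (neg_neg : ∀ a : L, neg (neg a) = a)
    (neg_sup : ∀ a b : L, neg (a ⊔ b) = neg a ⊓ neg b)
    (neg_inf : ∀ a b : L, neg (a ⊓ b) = neg a ⊔ neg b)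
    (T1 : ∀ a b : L, I (a ⊓ b) = I a ⊓ I b)
    (T2 : ∀ a : L, I (I a) = I a)
    (T3 : ∀ a : L, I a ≤ a)
    (T4 : I (⊤ : L) = ⊤)
    (T5 : ∀ a : L, neg (I (neg (I a))) = I a) :
    ∀ a b : L, I (neg (I (I a ⊔ I b))) = I (I (neg (I a)) ⊓ I (neg (I b))) := by
  intro a b
  -- key: I (neg (I x)) = neg (I x)
  have key : ∀ x : L, I (neg (I x)) = neg (I x) := by
    intro x
    have := congrArg neg (T5 x)
    rwa [neg_neg] at this
  -- I is monotone
  have mono : ∀ x y : L, x ≤ y → I x ≤ I y := by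
    intro x y h
    have : I (x ⊓ y) = I x ⊓ I y := T1 x y
    rw [inf_eq_left.mpr h] at this
    exact le_of_eq_of_le this inf_le_right
  -- I fixes Ia ⊔ Ib
  have fix : I (I a ⊔ I b) = I a ⊔ I b := by
    refine le_antisymm (T3 _) (sup_le ?_ ?_)
    · calc I a = I (I a) := (T2 a).symm
        _ ≤ I (I a ⊔ I b) := mono _ _ le_sup_left
    · calc I b = I (I b) := (T2 b).symm
        _ ≤ I (I a ⊔ I b) := mono _ _ le_sup_right
  rw [T1, T2, T2, key, key, key, fix, neg_sup]
end

section
/- In any tqBa5, the kernel K_I with operations α ∪ β := I(α ∨ β), α ∩ β := I(α ∧ β), ∼α := I¬α, 1 := ⊤, 0 := ⊥ forms a De Morgan algebra. -/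
theorem stmt13 {L : Type*} [DistribLattice L] [BoundedOrder L] (neg I : L → L)
    (neg_neg : ∀ a : L, neg (neg a) = a)
    (neg_sup : ∀ a b : L, neg (a ⊔ b) = neg a ⊓ neg b)
    (neg_inf : ∀ a b : L, neg (a ⊓ b) = neg a ⊔ neg b)
    (T1 : ∀ a b : L, I (a ⊓ b) = I a ⊓ I b)
    (T2 : ∀ a : L, I (I a) = I a)
    (T3 : ∀ a : L, I a ≤ a)
    (T4 : I (⊤ : L) = ⊤)
    (T5 : ∀ a : L, neg (I (neg (I a))) = I a) :
    ∀ α β γ : L, (∃ a : L, α = I a) → (∃ b : L, β = I b) → (∃ c : L, γ = I c) →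
      I (α ⊔ β) = I (β ⊔ α) ∧
      I (α ⊓ β) = I (β ⊓ α) ∧
      I (I (α ⊔ β) ⊔ γ) = I (α ⊔ I (β ⊔ γ)) ∧
      I (I (α ⊓ β) ⊓ γ) = I (α ⊓ I (β ⊓ γ)) ∧
      I (α ⊔ I (α ⊓ β)) = α ∧
      I (α ⊓ I (α ⊔ β)) = α ∧
      I (α ⊓ I (β ⊔ γ)) = I (I (α ⊓ β) ⊔ I (α ⊓ γ)) ∧
      I (α ⊓ (⊤ : L)) = α ∧
      I (α ⊔ (⊥ : L)) = α ∧
      I (neg (I (neg α))) = α ∧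
      I (neg (I (α ⊔ β))) = I (I (neg α) ⊓ I (neg β)) ∧
      I (neg (I (α ⊓ β))) = I (I (neg α) ⊔ I (neg β)) := by
  have mono : ∀ a b : L, a ≤ b → I a ≤ I b := by
    intro a b h
    have h1 : I (a ⊓ b) = I a ⊓ I b := T1 a b
    rw [inf_eq_left.mpr h] at h1
    exact inf_eq_left.mp h1.symm
  have ksup : ∀ x y : L, I x = x → I y = y → I (x ⊔ y) = x ⊔ y := by
    intro x y hx hy
    refine le_antisymm (T3 _) (sup_le ?_ ?_)
    · exact le_trans (le_of_eq hx.symm) (mono x (x ⊔ y) le_sup_left)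
    · exact le_trans (le_of_eq hy.symm) (mono y (x ⊔ y) le_sup_right)
  have kinf : ∀ x y : L, I x = x → I y = y → I (x ⊓ y) = x ⊓ y := by
    intro x y hx hy
    rw [T1, hx, hy]
  rintro α β γ ⟨a, ha⟩ ⟨b, hb⟩ ⟨c, hc⟩
  have fα : I α = α := by rw [ha, T2]
  have fβ : I β = β := by rw [hb, T2]
  have fγ : I γ = γ := by rw [hc, T2]
  have hnα : I (neg α) = neg α := by
    have := congrArg neg (T5 a)
    rw [neg_neg] at this
    rw [ha, this]
  have hnβ : I (neg β) = neg β := by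
    have := congrArg neg (T5 b)
    rw [neg_neg] at this
    rw [hb, this]
  refine ⟨by rw [sup_comm], by rw [inf_comm], ?_, ?_, ?_, ?_, ?_, ?_, ?_, ?_, ?_, ?_⟩
  · rw [ksup α β fα fβ, ksup β γ fβ fγ, sup_assoc]
  · rw [kinf α β fα fβ, kinf β γ fβ fγ, inf_assoc]
  · rw [kinf α β fα fβ, sup_inf_self, fα]
  · rw [ksup α β fα fβ, inf_sup_self, fα]
  · rw [ksup β γ fβ fγ, kinf α β fα fβ, kinf α γ fα fγ, inf_sup_left]
  · rw [inf_top_eq, fα]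
  · rw [sup_bot_eq, fα]
  · rw [hnα, neg_neg, fα]
  · rw [ksup α β fα fβ, neg_sup, hnα, hnβ]
  · rw [kinf α β fα fβ, neg_inf, hnα, hnβ]
end

section
/- In any IA1 (a tqBa5 additionally satisfying T6: Ia ∨ ¬Ia = ⊤), the kernel K_I with operations ∪, ∩, ∼ (α∪β := I(α∨β), α∩β := I(α∧β), ∼α := I¬α) is a Boolean algebra; in particular ∼α ∪ α = ⊤ for all α ∈ K_I. -/
theorem stmt14 {L : Type*} [DistribLattice L] [BoundedOrder L] (neg I : L → L)
    (neg_neg : ∀ a : L, neg (neg a) = a)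
    (neg_sup : ∀ a b : L, neg (a ⊔ b) = neg a ⊓ neg b)
    (neg_inf : ∀ a b : L, neg (a ⊓ b) = neg a ⊔ neg b)
    (T1 : ∀ a b : L, I (a ⊓ b) = I a ⊓ I b)
    (T2 : ∀ a : L, I (I a) = I a)
    (T3 : ∀ a : L, I a ≤ a)
    (T4 : I (⊤ : L) = ⊤)
    (T5 : ∀ a : L, neg (I (neg (I a))) = I a)
    (T6 : ∀ a : L, I a ⊔ neg (I a) = ⊤) :
    (∀ α β γ : L, (∃ a : L, α = I a) → (∃ b : L, β = I b) → (∃ c : L, γ = I c) →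
      I (α ⊔ β) = I (β ⊔ α) ∧
      I (α ⊓ β) = I (β ⊓ α) ∧
      I (I (α ⊔ β) ⊔ γ) = I (α ⊔ I (β ⊔ γ)) ∧
      I (I (α ⊓ β) ⊓ γ) = I (α ⊓ I (β ⊓ γ)) ∧
      I (α ⊔ I (α ⊓ β)) = α ∧
      I (α ⊓ I (α ⊔ β)) = α ∧
      I (α ⊓ I (β ⊔ γ)) = I (I (α ⊓ β) ⊔ I (α ⊓ γ)) ∧
      I (α ⊓ (⊤ : L)) = α ∧
      I (α ⊔ (⊥ : L)) = α ∧
      I (neg (I (neg α))) = α ∧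
      I (neg (I (α ⊔ β))) = I (I (neg α) ⊓ I (neg β)) ∧
      I (neg (I (α ⊓ β))) = I (I (neg α) ⊔ I (neg β))) ∧
    (∀ α : L, (∃ a : L, α = I a) →
      I (I (neg α) ⊔ α) = (⊤ : L) ∧ I (α ⊓ I (neg α)) = (⊥ : L)) := by
  -- ¬⊤ = ⊥
  have neg_top : neg (⊤ : L) = ⊥ := by
    have h := neg_sup (neg (⊥ : L)) ⊤
    rw [sup_top_eq] at h
    have : neg (⊤ : L) ≤ neg (neg (⊥ : L)) := by rw [h]; exact inf_le_left
    rw [neg_neg] at this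
    exact le_antisymm this bot_le
  -- kernel closed under neg
  have kneg : ∀ x : L, I x = x → I (neg x) = neg x := by
    intro x hx
    have h := congrArg neg (T5 x)
    rw [neg_neg, hx] at h
    exact h
  -- kernel closed under inf
  have kinf : ∀ x y : L, I x = x → I y = y → I (x ⊓ y) = x ⊓ y := by
    intro x y hx hy; rw [T1, hx, hy]
  -- kernel closed under sup
  have ksup : ∀ x y : L, I x = x → I y = y → I (x ⊔ y) = x ⊔ y := by
    intro x y hx hy
    have hn : I (neg (x ⊔ y)) = neg (x ⊔ y) := by
      rw [neg_sup, T1, kneg x hx, kneg y hy, ← neg_sup]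
    have h := kneg (I (neg (x ⊔ y))) (T2 _)
    rw [hn, neg_neg] at h
    exact h
  constructor
  · rintro α β γ ⟨a, rfl⟩ ⟨b, rfl⟩ ⟨c, rfl⟩
    have hab : I (I a ⊔ I b) = I a ⊔ I b := ksup _ _ (T2 a) (T2 b)
    have hbc : I (I b ⊔ I c) = I b ⊔ I c := ksup _ _ (T2 b) (T2 c)
    have hiab : I (I a ⊓ I b) = I a ⊓ I b := kinf _ _ (T2 a) (T2 b)
    have hibc : I (I b ⊓ I c) = I b ⊓ I c := kinf _ _ (T2 b) (T2 c)
    have hiac : I (I a ⊓ I c) = I a ⊓ I c := kinf _ _ (T2 a) (T2 c)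
    have hna : I (neg (I a)) = neg (I a) := kneg _ (T2 a)
    have hnb : I (neg (I b)) = neg (I b) := kneg _ (T2 b)
    refine ⟨?_, ?_, ?_, ?_, ?_, ?_, ?_, ?_, ?_, ?_, ?_, ?_⟩
    · rw [ksup _ _ (T2 a) (T2 b), ksup _ _ (T2 b) (T2 a), sup_comm]
    · rw [kinf _ _ (T2 a) (T2 b), kinf _ _ (T2 b) (T2 a), inf_comm]
    · rw [hab, hbc, ksup _ _ hab (T2 c), ksup _ _ (T2 a) hbc, sup_assoc]
    · rw [hiab, hibc, kinf _ _ hiab (T2 c), kinf _ _ (T2 a) hibc, inf_assoc]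
    · rw [hiab, ksup _ _ (T2 a) hiab, sup_inf_self]
    · rw [hab, kinf _ _ (T2 a) hab, inf_sup_self]
    · rw [hbc, hiab, hiac, kinf _ _ (T2 a) hbc, ksup _ _ hiab hiac, inf_sup_left]
    · rw [inf_top_eq]; exact T2 a
    · rw [sup_bot_eq]; exact T2 a
    · rw [kneg (I (neg (I a))) (T2 _)]; exact T5 a
    · rw [hab, neg_sup, hna, hnb]
    · rw [hiab, neg_inf, hna, hnb]
  · rintro α ⟨a, rfl⟩
    have hna : I (neg (I a)) = neg (I a) := kneg _ (T2 a)
    have h := congrArg neg (T6 a)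
    rw [neg_sup, neg_neg, neg_top] at h
    constructor
    · rw [hna, ksup _ _ hna (T2 a), sup_comm]; exact T6 a
    · rw [hna, kinf _ _ (T2 a) hna, inf_comm]; exact h
end

section
/- In any IA1, for each α in the kernel, ∼α := I¬α is the complement of α in K_I: α ∩ ∼α = 0 and α ∪ ∼α = 1 (where α∩β := I(α∧β), α∪β := I(α∨β), 0 := ⊥, 1 := ⊤). -/
theorem stmt15 {L : Type*} [DistribLattice L] [BoundedOrder L] (neg I : L → L)
    (neg_neg : ∀ a : L, neg (neg a) = a)
    (neg_sup : ∀ a b : L, neg (a ⊔ b) = neg a ⊓ neg b)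
    (neg_inf : ∀ a b : L, neg (a ⊓ b) = neg a ⊔ neg b)
    (T1 : ∀ a b : L, I (a ⊓ b) = I a ⊓ I b)
    (T2 : ∀ a : L, I (I a) = I a)
    (T3 : ∀ a : L, I a ≤ a)
    (T4 : I (⊤ : L) = ⊤)
    (T5 : ∀ a : L, neg (I (neg (I a))) = I a)
    (T6 : ∀ a : L, I a ⊔ neg (I a) = ⊤) :
    ∀ α : L, (∃ a : L, α = I a) →
      I (α ⊓ I (neg α)) = (⊥ : L) ∧ I (α ⊔ I (neg α)) = (⊤ : L) := by
  -- neg ⊤ = ⊥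
  have negtop : neg (⊤ : L) = ⊥ := by
    have h : neg (⊤ : L) ≤ ⊥ := by
      have := neg_sup (neg ⊥) ⊤
      rw [sup_top_eq, neg_neg] at this
      rw [this]
      exact inf_le_left
    exact le_antisymm h bot_le
  rintro α ⟨a, rfl⟩
  -- I (neg (I a)) = neg (I a)
  have key : I (neg (I a)) = neg (I a) := by
    have := congrArg neg (T5 a)
    rwa [neg_neg] at this
  constructor
  · rw [key, T1, T2, key]
    have hneg : neg (I a ⊓ neg (I a)) = ⊤ := by
      rw [neg_inf, neg_neg, sup_comm, T6]
    have := congrArg neg hneg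
    rwa [neg_neg, negtop] at this
  · rw [key, T6, T4]
end

section
/- Let T be an IA3, i.e., a tqBa5 additionally satisfying T8: Ia ≤ Ib and Ca ≤ Cb imply a ≤ b. Then for all a, b ∈ L, a ∧ Cb ≤ Ia ∨ b. -/
theorem stmt16 {L : Type*} [DistribLattice L] [BoundedOrder L] (neg I : L → L)
    (neg_neg : ∀ a : L, neg (neg a) = a)
    (neg_sup : ∀ a b : L, neg (a ⊔ b) = neg a ⊓ neg b)
    (neg_inf : ∀ a b : L, neg (a ⊓ b) = neg a ⊔ neg b)
    (T1 : ∀ a b : L, I (a ⊓ b) = I a ⊓ I b)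
    (T2 : ∀ a : L, I (I a) = I a)
    (T3 : ∀ a : L, I a ≤ a)
    (T4 : I (⊤ : L) = ⊤)
    (T5 : ∀ a : L, neg (I (neg (I a))) = I a)
    (T8 : ∀ a b : L, I a ≤ I b → neg (I (neg a)) ≤ neg (I (neg b)) → a ≤ b) :
    ∀ a b : L, a ⊓ neg (I (neg b)) ≤ I a ⊔ b := by
  intro a b
  have neg_anti : ∀ x y : L, x ≤ y → neg y ≤ neg x := by
    intro x y h
    have h2 : neg x = neg x ⊔ neg y := by rw [← neg_inf, inf_eq_left.mpr h]
    calc neg y ≤ neg x ⊔ neg y := le_sup_right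
      _ = neg x := h2.symm
  have I_mono : ∀ x y : L, x ≤ y → I x ≤ I y := by
    intro x y h
    have h2 : I x = I x ⊓ I y := by rw [← T1, inf_eq_left.mpr h]
    calc I x = I x ⊓ I y := h2
      _ ≤ I y := inf_le_right
  have Ifix : ∀ x : L, I (neg (I x)) = neg (I x) := by
    intro x
    have := congrArg neg (T5 x)
    rwa [neg_neg] at this
  apply T8
  · -- I (a ⊓ Cb) ≤ I (Ia ⊔ b)
    rw [T1]
    calc I a ⊓ I (neg (I (neg b))) ≤ I a := inf_le_left
      _ = I (I a) := (T2 a).symm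
      _ ≤ I (I a ⊔ b) := I_mono _ _ le_sup_left
  · -- C (a ⊓ Cb) ≤ C (Ia ⊔ b)
    have hC2 : neg (I (neg (I a ⊔ b))) = I a ⊔ neg (I (neg b)) := by
      rw [neg_sup, T1, Ifix, neg_inf, neg_neg]
    rw [hC2]
    have h1 : neg (I (neg (a ⊓ neg (I (neg b))))) ≤ neg (I (neg (neg (I (neg b))))) :=
      neg_anti _ _ (I_mono _ _ (neg_anti _ _ inf_le_right))
    have h2 : neg (I (neg (neg (I (neg b))))) = neg (I (neg b)) := by
      rw [neg_neg, T2]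
    calc neg (I (neg (a ⊓ neg (I (neg b))))) ≤ neg (I (neg (neg (I (neg b))))) := h1
      _ = neg (I (neg b)) := h2
      _ ≤ I a ⊔ neg (I (neg b)) := le_sup_right
end

section
/- Conversely, a tqBa5 satisfying the inequality a ∧ Cb ≤ Ia ∨ b for all a, b also satisfies rule T8: Ia ≤ Ib and Ca ≤ Cb imply a ≤ b. -/
theorem stmt17 {L : Type*} [DistribLattice L] [BoundedOrder L] (neg I : L → L)
    (neg_neg : ∀ a : L, neg (neg a) = a)
    (neg_sup : ∀ a b : L, neg (a ⊔ b) = neg a ⊓ neg b)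
    (neg_inf : ∀ a b : L, neg (a ⊓ b) = neg a ⊔ neg b)
    (T1 : ∀ a b : L, I (a ⊓ b) = I a ⊓ I b)
    (T2 : ∀ a : L, I (I a) = I a)
    (T3 : ∀ a : L, I a ≤ a)
    (T4 : I (⊤ : L) = ⊤)
    (T5 : ∀ a : L, neg (I (neg (I a))) = I a)
    (h : ∀ a b : L, a ⊓ neg (I (neg b)) ≤ I a ⊔ b) :
    ∀ a b : L, I a ≤ I b → neg (I (neg a)) ≤ neg (I (neg b)) → a ≤ b := by
  have anti : ∀ x y : L, x ≤ y → neg y ≤ neg x := by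
    intro x y hxy
    have : neg y = neg x ⊓ neg y := by rw [← neg_sup, sup_eq_right.mpr hxy]
    rw [this]; exact inf_le_left
  intro a b hI hC
  have haCa : a ≤ neg (I (neg a)) := by
    have := anti _ _ (T3 (neg a))
    rwa [neg_neg] at this
  have haCb : a ≤ neg (I (neg b)) := haCa.trans hC
  have : a ≤ I a ⊔ b := le_trans (le_inf le_rfl haCb) (h a b)
  calc a ≤ I a ⊔ b := this
    _ ≤ b ⊔ b := sup_le_sup_right (hI.trans (T3 b)) b
    _ = b := sup_idem b
end
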